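/- Let G be a finite group, C a conjugacy class with chosen representative r ∈ C, p : C → G a transversal with p(c)·r·p(c)⁻¹ = c, and let D be a conjugacy class of the centralizer Z(r) with representative d₀ ∈ D. Let Irr(Z(r)) be a complete set of pairwise non-isomorphic irreducible unitary representations of Z(r). Then, as functions G × G → ℂ, (|C|·|Z(r)|/(|G|·|D|))·Σ_{c∈C} Σ_{d∈D} F^{c, p(c)·d·p(c)⁻¹} = Σ_{R∈Irr(Z(r))} (χ^R(d₀)/d_R)·P^{[C,R]}. -/

import Mathlib

/-!
Statement 16: For a conjugacy class `C` of `G` with representative `r`, transversal `p`,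
and a conjugacy class `D` of `Z(r)` with representative `d₀`:
`(|C|·|Z(r)|/(|G|·|D|))·Σ_{c∈C} Σ_{d∈D} F^{c, p(c)·d·p(c)⁻¹}
  = Σ_{R∈Irr(Z(r))} (χ^R(d₀)/d_R)·P^{[C,R]}`.
-/

open scoped Classical

noncomputable section

/-- `F^{g,h}`: the indicator function of the pair `(g,h)`. -/
def Fgh {G : Type*} (g h : G) : G × G → ℂ := fun x => if x = (g, h) then 1 else 0

/-- The conjugacy class of `r` in `G`, as a `Finset`. -/
def conjClass {G : Type*} [Group G] [Fintype G] (r : G) : Finset G :=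
  Finset.image (fun g => g * r * g⁻¹) Finset.univ

/-- The centralizer `Z(r)` of `r` in `G`, as a `Finset`. -/
def centFinset {G : Type*} [Group G] [Fintype G] (r : G) : Finset G :=
  Finset.univ.filter fun z => z * r = r * z

/-- The conjugacy class of `x` in the group `Z(r)`, as a `Finset` of `G`. -/
def conjClassIn {G : Type*} [Group G] [Fintype G] (r x : G) : Finset G :=
  (centFinset r).image fun w => w * x * w⁻¹

/-- `ρ : G → Matrix (Fin d) (Fin d) ℂ` restricts to a unitary representation of `Z(r)`. -/
def IsCentRep {G : Type*} [Group G] [Fintype G] (r : G) {d : ℕ}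
    (ρ : G → Matrix (Fin d) (Fin d) ℂ) : Prop :=
  ρ 1 = 1 ∧
  (∀ z w : G, z * r = r * z → w * r = r * w → ρ (z * w) = ρ z * ρ w) ∧
  (∀ z : G, z * r = r * z → ρ z ∈ Matrix.unitaryGroup (Fin d) ℂ)

/-- `ρ` restricts to an irreducible unitary representation of `Z(r)`. -/
def IsCentIrrep {G : Type*} [Group G] [Fintype G] (r : G) {d : ℕ}
    (ρ : G → Matrix (Fin d) (Fin d) ℂ) : Prop :=
  IsCentRep r ρ ∧
  ∀ M : Matrix (Fin d) (Fin d) ℂ,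
    (∀ z : G, z * r = r * z → M * ρ z = ρ z * M) →
    ∃ c : ℂ, M = c • (1 : Matrix (Fin d) (Fin d) ℂ)

/-- Isomorphism of two representations of the centralizer `Z(r)`. -/
def RepIsoOn {G : Type*} [Group G] [Fintype G] (r : G) {d₁ d₂ : ℕ}
    (ρ₁ : G → Matrix (Fin d₁) (Fin d₁) ℂ) (ρ₂ : G → Matrix (Fin d₂) (Fin d₂) ℂ) : Prop :=
  ∃ (U : Matrix (Fin d₁) (Fin d₂) ℂ) (V : Matrix (Fin d₂) (Fin d₁) ℂ),
    U * V = 1 ∧ V * U = 1 ∧ ∀ z : G, z * r = r * z → ρ₁ z * U = U * ρ₂ z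

/-- The trace probing operator
`P^{[C,R]} := (|C|·d_R/|G|)·Σ_{c∈C} Σ_{z∈Z(r)} conj(χ^R(z))·F^{c, p(c)·z·p(c)⁻¹}`. -/
def Ptr {G : Type*} [Group G] [Fintype G] (r : G) (p : G → G) {d : ℕ}
    (ρ : G → Matrix (Fin d) (Fin d) ℂ) : G × G → ℂ :=
  ((((conjClass r).card : ℂ) * (d : ℂ)) / (Fintype.card G : ℂ)) •
    ∑ c ∈ conjClass r, ∑ z ∈ centFinset r,
      (starRingEnd ℂ) ((ρ z).trace) • Fgh c (p c * z * (p c)⁻¹)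


section Basics
variable {G : Type*} [Group G] [Fintype G] {r : G}

lemma mem_centFinset {z : G} : z ∈ centFinset r ↔ z * r = r * z := by
  simp [centFinset]

lemma one_mem_cent : (1 : G) ∈ centFinset r := by simp [mem_centFinset]

lemma inv_mem_cent {z : G} (hz : z ∈ centFinset r) : z⁻¹ ∈ centFinset r := by
  rw [mem_centFinset] at hz ⊢
  have := congrArg (fun x => z⁻¹ * x * z⁻¹) hz
  simpa [mul_assoc] using this.symm

lemma mul_mem_cent {z w : G} (hz : z ∈ centFinset r) (hw : w ∈ centFinset r) :
    z * w ∈ centFinset r := by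
  rw [mem_centFinset] at hz hw ⊢
  calc z * w * r = z * (w * r) := by rw [mul_assoc]
    _ = z * (r * w) := by rw [hw]
    _ = (z * r) * w := by rw [mul_assoc]
    _ = r * (z * w) := by rw [hz, mul_assoc]

lemma sum_cent_mul_left {M : Type*} [AddCommMonoid M] {w : G} (hw : w ∈ centFinset r)
    (F : G → M) : ∑ z ∈ centFinset r, F (w * z) = ∑ z ∈ centFinset r, F z := by
  apply Finset.sum_nbij' (fun z => w * z) (fun z => w⁻¹ * z)
  · intro a ha; exact mul_mem_cent hw ha
  · intro a ha; exact mul_mem_cent (inv_mem_cent hw) ha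
  · intro a _; simp [mul_assoc]
  · intro a _; simp [mul_assoc]
  · intro a _; rfl

lemma sum_cent_conj {M : Type*} [AddCommMonoid M] {w : G} (hw : w ∈ centFinset r)
    (F : G → M) : ∑ z ∈ centFinset r, F (w * z * w⁻¹) = ∑ z ∈ centFinset r, F z := by
  apply Finset.sum_nbij' (fun z => w * z * w⁻¹) (fun z => w⁻¹ * z * w)
  · intro a ha; exact mul_mem_cent (mul_mem_cent hw ha) (inv_mem_cent hw)
  · intro a ha; exact mul_mem_cent (mul_mem_cent (inv_mem_cent hw) ha) hw
  · intro a _; group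
  · intro a _; group
  · intro a _; rfl

end Basics

section RepFacts
variable {G : Type*} [Group G] [Fintype G] {r : G} {n : ℕ} {σ : G → Matrix (Fin n) (Fin n) ℂ}

lemma rep_mul (hσ : IsCentRep r σ) {z w : G} (hz : z ∈ centFinset r) (hw : w ∈ centFinset r) :
    σ (z * w) = σ z * σ w :=
  hσ.2.1 z w (mem_centFinset.mp hz) (mem_centFinset.mp hw)

lemma rep_inv_mul (hσ : IsCentRep r σ) {z : G} (hz : z ∈ centFinset r) :
    σ z⁻¹ * σ z = 1 := by
  rw [← rep_mul hσ (inv_mem_cent hz) hz, inv_mul_cancel, hσ.1]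

lemma rep_mul_inv (hσ : IsCentRep r σ) {z : G} (hz : z ∈ centFinset r) :
    σ z * σ z⁻¹ = 1 := by
  rw [← rep_mul hσ hz (inv_mem_cent hz), mul_inv_cancel, hσ.1]

lemma rep_star (hσ : IsCentRep r σ) {z : G} (hz : z ∈ centFinset r) :
    star (σ z) = σ z⁻¹ := by
  have hu : star (σ z) * σ z = 1 :=
    Matrix.mem_unitaryGroup_iff'.mp (hσ.2.2 z (mem_centFinset.mp hz))
  calc star (σ z) = star (σ z) * (σ z * σ z⁻¹) := by rw [rep_mul_inv hσ hz, mul_one]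
    _ = (star (σ z) * σ z) * σ z⁻¹ := by rw [mul_assoc]
    _ = σ z⁻¹ := by rw [hu, one_mul]

/-- trace is a class function -/
lemma rep_trace_conj (hσ : IsCentRep r σ) {w z : G} (hw : w ∈ centFinset r)
    (hz : z ∈ centFinset r) : (σ (w * z * w⁻¹)).trace = (σ z).trace := by
  rw [rep_mul hσ (mul_mem_cent hw hz) (inv_mem_cent hw), rep_mul hσ hw hz,
    Matrix.trace_mul_cycle, ← rep_mul hσ (inv_mem_cent hw) hw, inv_mul_cancel, hσ.1, one_mul]

/-- `T f σ = ∑_{z∈Z} conj (f z) • σ z` -/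
def Tf {G : Type*} [Group G] [Fintype G] (r : G) (f : G → ℂ) {n : ℕ}
    (σ : G → Matrix (Fin n) (Fin n) ℂ) : Matrix (Fin n) (Fin n) ℂ :=
  ∑ z ∈ centFinset r, (starRingEnd ℂ) (f z) • σ z

lemma Tf_commute (hσ : IsCentRep r σ) {f : G → ℂ}
    (hf : ∀ w z, w ∈ centFinset r → z ∈ centFinset r → f (w * z * w⁻¹) = f z)
    {w : G} (hw : w ∈ centFinset r) : σ w * Tf r f σ = Tf r f σ * σ w := by
  unfold Tf
  rw [Finset.mul_sum, Finset.sum_mul]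
  have h1 : ∀ z ∈ centFinset r, σ w * ((starRingEnd ℂ) (f z) • σ z)
      = (starRingEnd ℂ) (f (w * z * w⁻¹)) • σ (w * (z * w⁻¹) * w) := by
    intro z hz
    rw [hf w z hw hz]
    have : w * (z * w⁻¹) * w = w * z := by group
    rw [this, rep_mul hσ hw hz, Matrix.mul_smul]
  rw [Finset.sum_congr rfl h1]
  have h2 := sum_cent_conj (M := Matrix (Fin n) (Fin n) ℂ) hw
    (fun u => (starRingEnd ℂ) (f u) • σ (u * w))
  have h3 : ∀ z ∈ centFinset r, (starRingEnd ℂ) (f (w * z * w⁻¹)) • σ (w * (z * w⁻¹) * w)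
      = (starRingEnd ℂ) (f (w * z * w⁻¹)) • σ ((w * z * w⁻¹) * w) := by
    intro z hz; congr 2; group
  rw [Finset.sum_congr rfl h3, h2]
  apply Finset.sum_congr rfl
  intro z hz
  rw [rep_mul hσ hz hw, Matrix.smul_mul]

end RepFacts

section Schur
open scoped Matrix
variable {G : Type*} [Group G] [Fintype G] {r : G}

lemma mul_stdBasis_mul_apply {m k : ℕ} (M : Matrix (Fin m) (Fin m) ℂ)
    (N : Matrix (Fin k) (Fin k) ℂ) (a a' : Fin m) (b' b : Fin k) :
    (M * (Matrix.single a' b' (1:ℂ)) * N) a b = M a a' * N b' b := by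
  rw [Matrix.mul_apply]
  rw [Finset.sum_eq_single b' (fun c _ hc => by
    rw [Matrix.mul_apply, Finset.sum_eq_zero (fun x _ => by
      simp [Matrix.single, Ne.symm hc])]; ring)
    (by simp)]
  rw [Matrix.mul_apply, Finset.sum_eq_single a' (fun x _ hx => by
      simp [Matrix.single, Ne.symm hx])
    (by simp)]
  simp [Matrix.single]

/-- intertwiner averaging operator -/
def Tij {G : Type*} [Group G] [Fintype G] (r : G) {d₁ d₂ : ℕ}
    (ρ₁ : G → Matrix (Fin d₁) (Fin d₁) ℂ) (ρ₂ : G → Matrix (Fin d₂) (Fin d₂) ℂ)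
    (X : Matrix (Fin d₁) (Fin d₂) ℂ) : Matrix (Fin d₁) (Fin d₂) ℂ :=
  ∑ z ∈ centFinset r, ρ₁ z * X * (ρ₂ z)ᴴ

lemma Tij_intertwine {d₁ d₂ : ℕ} {ρ₁ : G → Matrix (Fin d₁) (Fin d₁) ℂ}
    {ρ₂ : G → Matrix (Fin d₂) (Fin d₂) ℂ} (h₁ : IsCentRep r ρ₁) (h₂ : IsCentRep r ρ₂)
    (X : Matrix (Fin d₁) (Fin d₂) ℂ) {w : G} (hw : w ∈ centFinset r) :
    ρ₁ w * Tij r ρ₁ ρ₂ X = Tij r ρ₁ ρ₂ X * ρ₂ w := by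
  unfold Tij
  rw [Matrix.mul_sum, Matrix.sum_mul]
  have key := sum_cent_mul_left (M := Matrix (Fin d₁) (Fin d₂) ℂ) hw
    (fun u => ρ₁ u * X * (ρ₂ (w⁻¹ * u))ᴴ)
  calc ∑ z ∈ centFinset r, ρ₁ w * (ρ₁ z * X * (ρ₂ z)ᴴ)
      = ∑ z ∈ centFinset r, ρ₁ (w * z) * X * (ρ₂ (w⁻¹ * (w * z)))ᴴ := by
        apply Finset.sum_congr rfl; intro z hz
        rw [rep_mul h₁ hw hz, inv_mul_cancel_left]
        simp only [Matrix.mul_assoc]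
    _ = ∑ z ∈ centFinset r, ρ₁ z * X * (ρ₂ (w⁻¹ * z))ᴴ := key
    _ = ∑ z ∈ centFinset r, ρ₁ z * X * (ρ₂ z)ᴴ * ρ₂ w := by
        apply Finset.sum_congr rfl; intro z hz
        rw [rep_mul h₂ (inv_mem_cent hw) hz, Matrix.conjTranspose_mul,
          ← Matrix.star_eq_conjTranspose (ρ₂ w⁻¹), rep_star h₂ (inv_mem_cent hw), inv_inv]
        simp only [Matrix.mul_assoc]

/-- Schur: a nonzero intertwiner between irreps yields an isomorphism. -/
lemma intertwiner_zero {d₁ d₂ : ℕ} {ρ₁ : G → Matrix (Fin d₁) (Fin d₁) ℂ}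
    {ρ₂ : G → Matrix (Fin d₂) (Fin d₂) ℂ} (h₁ : IsCentIrrep r ρ₁) (h₂ : IsCentIrrep r ρ₂)
    (hni : ¬ RepIsoOn r ρ₁ ρ₂) (T : Matrix (Fin d₁) (Fin d₂) ℂ)
    (hT : ∀ w ∈ centFinset r, ρ₁ w * T = T * ρ₂ w) : T = 0 := by
  by_contra hT0
  have hTs : ∀ w ∈ centFinset r, ρ₂ w * Tᴴ = Tᴴ * ρ₁ w := by
    intro w hw
    have h := congrArg Matrix.conjTranspose (hT w⁻¹ (inv_mem_cent hw))
    rw [Matrix.conjTranspose_mul, Matrix.conjTranspose_mul,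
      ← Matrix.star_eq_conjTranspose (ρ₁ w⁻¹), ← Matrix.star_eq_conjTranspose (ρ₂ w⁻¹),
      rep_star h₁.1 (inv_mem_cent hw), rep_star h₂.1 (inv_mem_cent hw), inv_inv] at h
    exact h.symm
  obtain ⟨a, ha⟩ := h₁.2 (T * Tᴴ) (by
    intro z hz
    have hz' : z ∈ centFinset r := mem_centFinset.mpr hz
    rw [Matrix.mul_assoc, ← hTs z hz', ← Matrix.mul_assoc, ← hT z hz', Matrix.mul_assoc])
  obtain ⟨b, hb⟩ := h₂.2 (Tᴴ * T) (by
    intro z hz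
    have hz' : z ∈ centFinset r := mem_centFinset.mpr hz
    rw [Matrix.mul_assoc, ← hT z hz', ← Matrix.mul_assoc, ← hTs z hz', Matrix.mul_assoc])
  obtain ⟨x, y, hxy⟩ : ∃ x y, T x y ≠ 0 := by
    by_contra h; push_neg at h; exact hT0 (by ext x y; simp [h])
  have hax : (T * Tᴴ) x x = ∑ l, (Complex.normSq (T x l) : ℂ) := by
    rw [Matrix.mul_apply]; apply Finset.sum_congr rfl; intro l _
    rw [Matrix.conjTranspose_apply, Complex.star_def, Complex.mul_conj]
  have ha0 : a ≠ 0 := by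
    intro h
    rw [h, zero_smul] at ha
    have h0 : (T * Tᴴ) x x = 0 := by rw [ha]; simp
    rw [hax] at h0
    have : ∑ l, Complex.normSq (T x l) = 0 := by exact_mod_cast h0
    have hz := (Finset.sum_eq_zero_iff_of_nonneg
      (fun l _ => Complex.normSq_nonneg (T x l))).mp this y (Finset.mem_univ y)
    exact hxy (Complex.normSq_eq_zero.mp hz)
  have hab : b = a := by
    have h1 : T * (Tᴴ * T) = (T * Tᴴ) * T := (Matrix.mul_assoc T Tᴴ T).symm
    rw [ha, hb, Matrix.mul_smul, Matrix.smul_mul, Matrix.mul_one, Matrix.one_mul] at h1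
    have h2 := congrFun (congrFun h1 x) y
    simp only [Matrix.smul_apply, smul_eq_mul] at h2
    exact mul_right_cancel₀ hxy h2
  exact hni ⟨T, a⁻¹ • Tᴴ, by
      rw [Matrix.mul_smul, ha, smul_smul, inv_mul_cancel₀ ha0, one_smul], by
      rw [Matrix.smul_mul, hb, hab, smul_smul, inv_mul_cancel₀ ha0, one_smul], by
      intro z hz; exact hT z (mem_centFinset.mpr hz)⟩

end Schur

section RowOrth
open scoped Matrix
variable {G : Type*} [Group G] [Fintype G] {r : G}

lemma trace_stdBasis {m : ℕ} (a b : Fin m) :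
    (Matrix.single a b (1:ℂ)).trace = if a = b then 1 else 0 := by
  by_cases h : a = b
  · subst h; simp [Matrix.trace, Matrix.diag, Matrix.single, Finset.sum_ite_eq]
  · simp only [Matrix.trace, Matrix.diag, Matrix.single, Matrix.of_apply]
    rw [Finset.sum_eq_zero, if_neg h]
    intro x _
    rw [if_neg]
    rintro ⟨h1, h2⟩; exact h (h1.trans h2.symm)

lemma sum_trace_pair {d₁ d₂ : ℕ} (ρ₁ : G → Matrix (Fin d₁) (Fin d₁) ℂ)
    (ρ₂ : G → Matrix (Fin d₂) (Fin d₂) ℂ) :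
    ∑ z ∈ centFinset r, (ρ₁ z).trace * ((ρ₂ z)ᴴ).trace
      = ∑ a : Fin d₁, ∑ b : Fin d₂,
          (Tij r ρ₁ ρ₂ (Matrix.single a b (1:ℂ))) a b := by
  have rhs : ∀ (a : Fin d₁) (b : Fin d₂), (Tij r ρ₁ ρ₂ (Matrix.single a b (1:ℂ))) a b
      = ∑ z ∈ centFinset r, (ρ₁ z) a a * ((ρ₂ z)ᴴ) b b := by
    intro a b
    unfold Tij
    rw [Matrix.sum_apply]
    exact Finset.sum_congr rfl fun z _ => mul_stdBasis_mul_apply _ _ _ _ _ _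
  calc ∑ z ∈ centFinset r, (ρ₁ z).trace * ((ρ₂ z)ᴴ).trace
      = ∑ z ∈ centFinset r, ∑ a : Fin d₁, ∑ b : Fin d₂, (ρ₁ z) a a * ((ρ₂ z)ᴴ) b b := by
        apply Finset.sum_congr rfl; intro z _
        simp only [Matrix.trace, Matrix.diag]
        rw [Finset.sum_mul_sum]
    _ = ∑ a : Fin d₁, ∑ z ∈ centFinset r, ∑ b : Fin d₂, (ρ₁ z) a a * ((ρ₂ z)ᴴ) b b :=
        Finset.sum_comm
    _ = ∑ a : Fin d₁, ∑ b : Fin d₂, ∑ z ∈ centFinset r, (ρ₁ z) a a * ((ρ₂ z)ᴴ) b b :=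
        Finset.sum_congr rfl fun a _ => Finset.sum_comm
    _ = ∑ a : Fin d₁, ∑ b : Fin d₂,
          (Tij r ρ₁ ρ₂ (Matrix.single a b (1:ℂ))) a b := by
        simp only [rhs]

lemma conj_trace_eq {m : ℕ} (M : Matrix (Fin m) (Fin m) ℂ) :
    (starRingEnd ℂ) M.trace = (Mᴴ).trace := by
  rw [Matrix.trace_conjTranspose]; rfl

lemma row_orth_ne {d₁ d₂ : ℕ} {ρ₁ : G → Matrix (Fin d₁) (Fin d₁) ℂ}
    {ρ₂ : G → Matrix (Fin d₂) (Fin d₂) ℂ} (h₁ : IsCentIrrep r ρ₁) (h₂ : IsCentIrrep r ρ₂)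
    (hni : ¬ RepIsoOn r ρ₁ ρ₂) :
    ∑ z ∈ centFinset r, (ρ₁ z).trace * (starRingEnd ℂ) ((ρ₂ z).trace) = 0 := by
  have h0 : ∀ X, Tij r ρ₁ ρ₂ X = 0 := fun X =>
    intertwiner_zero h₁ h₂ hni _ (fun w hw => Tij_intertwine h₁.1 h₂.1 X hw)
  calc ∑ z ∈ centFinset r, (ρ₁ z).trace * (starRingEnd ℂ) ((ρ₂ z).trace)
      = ∑ z ∈ centFinset r, (ρ₁ z).trace * ((ρ₂ z)ᴴ).trace := by
        simp only [conj_trace_eq]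
    _ = ∑ a : Fin d₁, ∑ b : Fin d₂,
          (Tij r ρ₁ ρ₂ (Matrix.single a b (1:ℂ))) a b := sum_trace_pair ρ₁ ρ₂
    _ = 0 := by simp [h0]

lemma row_orth_self {d₁ : ℕ} {ρ₁ : G → Matrix (Fin d₁) (Fin d₁) ℂ}
    (h₁ : IsCentIrrep r ρ₁) (hd : 0 < d₁) :
    ∑ z ∈ centFinset r, (ρ₁ z).trace * (starRingEnd ℂ) ((ρ₁ z).trace)
      = ((centFinset r).card : ℂ) := by
  have hdne : (d₁ : ℂ) ≠ 0 := by exact_mod_cast hd.ne'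
  have htr : ∀ X : Matrix (Fin d₁) (Fin d₁) ℂ,
      (Tij r ρ₁ ρ₁ X).trace = ((centFinset r).card : ℂ) * X.trace := by
    intro X
    unfold Tij
    rw [Matrix.trace_sum]
    rw [Finset.sum_congr rfl (fun z hz => ?_), Finset.sum_const, nsmul_eq_mul]
    rw [Matrix.trace_mul_cycle, ← Matrix.star_eq_conjTranspose,
      Matrix.mem_unitaryGroup_iff'.mp (h₁.1.2.2 z (mem_centFinset.mp hz)), Matrix.one_mul]
  have hsc : ∀ (a b : Fin d₁), ∃ c : ℂ,
      Tij r ρ₁ ρ₁ (Matrix.single a b (1:ℂ)) = c • 1 := fun a b =>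
    h₁.2 _ (fun z hz => (Tij_intertwine h₁.1 h₁.1 _ (mem_centFinset.mpr hz)).symm)
  calc ∑ z ∈ centFinset r, (ρ₁ z).trace * (starRingEnd ℂ) ((ρ₁ z).trace)
      = ∑ z ∈ centFinset r, (ρ₁ z).trace * ((ρ₁ z)ᴴ).trace := by simp only [conj_trace_eq]
    _ = ∑ a : Fin d₁, ∑ b : Fin d₁,
          (Tij r ρ₁ ρ₁ (Matrix.single a b (1:ℂ))) a b := sum_trace_pair ρ₁ ρ₁
    _ = ∑ a : Fin d₁, ∑ b : Fin d₁,
          (if a = b then ((centFinset r).card : ℂ) / (d₁ : ℂ) else 0) := by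
        apply Finset.sum_congr rfl; intro a _
        apply Finset.sum_congr rfl; intro b _
        obtain ⟨c, hc⟩ := hsc a b
        have hcd : c * (d₁ : ℂ) = ((centFinset r).card : ℂ) * (if a = b then 1 else 0) := by
          have h := htr (Matrix.single a b (1:ℂ))
          rw [hc, trace_stdBasis] at h
          simpa [Matrix.trace_smul, Matrix.trace_one] using h
        rw [hc]
        by_cases h : a = b
        · subst h
          simp only [Matrix.smul_apply, Matrix.one_apply_eq, smul_eq_mul, mul_one, if_pos rfl]
          rw [if_pos trivial, eq_div_iff hdne]
          simpa using hcd
        · simp [Matrix.smul_apply, Matrix.one_apply_ne h, h]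
    _ = ((centFinset r).card : ℂ) := by
        simp only [Finset.sum_ite_eq, Finset.mem_univ, if_true]
        rw [Finset.sum_const, Finset.card_univ, Fintype.card_fin, nsmul_eq_mul]
        field_simp

end RowOrth

section SubRep
open scoped Matrix
variable {G : Type*} [Group G] [Fintype G] {r : G}

lemma sum_over_pred {n k : ℕ} {Q : Fin n → Prop} [DecidablePred Q]
    (e : Fin k ≃ {x : Fin n // Q x}) (g : Fin n → ℂ) (hg : ∀ c, ¬ Q c → g c = 0) :
    ∑ c : Fin n, g c = ∑ a : Fin k, g (e a) := by
  have h1 : ∑ c : Fin n, g c = ∑ c ∈ Finset.univ.filter Q, g c := by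
    rw [Finset.sum_filter]
    apply Finset.sum_congr rfl
    intro c _
    by_cases h : Q c
    · rw [if_pos h]
    · rw [if_neg h, hg c h]
  calc ∑ c : Fin n, g c
      = ∑ c ∈ Finset.univ.filter Q, g c := h1
    _ = ∑ c : {x : Fin n // Q x}, g (c : Fin n) :=
        Finset.sum_subtype _ (fun x => by simp) _
    _ = ∑ a : Fin k, g (e a) := (Equiv.sum_comp e fun c => g (c : Fin n)).symm

lemma subrep_isCentRep {n k : ℕ} {σ' : G → Matrix (Fin n) (Fin n) ℂ} (hσ' : IsCentRep r σ')
    (Q : Fin n → Prop) [DecidablePred Q]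
    (hcross : ∀ z ∈ centFinset r, ∀ x y : Fin n, ¬ (Q x ↔ Q y) → σ' z x y = 0)
    (e : Fin k ≃ {x : Fin n // Q x}) :
    IsCentRep r (fun z => (σ' z).submatrix (fun a => ((e a : {x : Fin n // Q x}) : Fin n))
      (fun a => ((e a : {x : Fin n // Q x}) : Fin n))) := by
  set em : Fin k → Fin n := fun a => ((e a : {x : Fin n // Q x}) : Fin n) with hem
  have hQem : ∀ a : Fin k, Q (em a) := fun a => (e a).2
  refine ⟨?_, ?_, ?_⟩
  · ext a b
    simp only [Matrix.submatrix_apply, hσ'.1, Matrix.one_apply]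
    by_cases h : a = b
    · subst h; simp
    · rw [if_neg h, if_neg]
      intro hc
      exact h (e.injective (Subtype.ext hc))
  · intro z w hz hw
    ext a b
    simp only [Matrix.submatrix_apply]
    rw [hσ'.2.1 z w hz hw, Matrix.mul_apply, Matrix.mul_apply]
    rw [sum_over_pred e (fun c => σ' z (em a) c * σ' w c (em b))
      (fun c hc => by
        show σ' z (em a) c * σ' w c (em b) = 0
        rw [hcross z (mem_centFinset.mpr hz) _ c
          (fun h => hc (h.mp (hQem a))), zero_mul])]
    apply Finset.sum_congr rfl; intro c _
    rw [Matrix.submatrix_apply, Matrix.submatrix_apply]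
  · intro z hz
    rw [Matrix.mem_unitaryGroup_iff']
    have hfull := Matrix.mem_unitaryGroup_iff'.mp (hσ'.2.2 z hz)
    ext a b
    rw [Matrix.star_eq_conjTranspose, Matrix.mul_apply]
    have step : ∀ c : Fin n, ¬ Q c →
        (starRingEnd ℂ) (σ' z c (em a)) * σ' z c (em b) = 0 := by
      intro c hc
      rw [hcross z (mem_centFinset.mpr hz) c (em a)
        (fun h => hc (h.mpr (hQem a))), map_zero, zero_mul]
    calc ∑ c : Fin k, ((σ' z).submatrix em em)ᴴ a c * ((σ' z).submatrix em em) c b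
        = ∑ c : Fin k, (starRingEnd ℂ) (σ' z (em c) (em a)) * σ' z (em c) (em b) := by
          apply Finset.sum_congr rfl; intro c _
          rw [Matrix.conjTranspose_apply, Matrix.submatrix_apply, Matrix.submatrix_apply]; rfl
      _ = ∑ c : Fin n, (starRingEnd ℂ) (σ' z c (em a)) * σ' z c (em b) :=
          (sum_over_pred e (fun c => (starRingEnd ℂ) (σ' z c (em a)) * σ' z c (em b)) step).symm
      _ = (1 : Matrix (Fin n) (Fin n) ℂ) (em a) (em b) := by
          have hfull_ab := congrFun (congrFun hfull (em a)) (em b)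
          rw [Matrix.mul_apply, Matrix.star_eq_conjTranspose] at hfull_ab
          rw [← hfull_ab]
          apply Finset.sum_congr rfl; intro c _
          rw [Matrix.conjTranspose_apply]; rfl
      _ = (1 : Matrix (Fin k) (Fin k) ℂ) a b := by
          rw [Matrix.one_apply, Matrix.one_apply]
          by_cases h : a = b
          · subst h; simp
          · rw [if_neg (fun hc => h (e.injective (Subtype.ext hc))), if_neg h]

lemma Tf_submatrix {n k : ℕ} (σ' : G → Matrix (Fin n) (Fin n) ℂ) (f : G → ℂ)
    (em : Fin k → Fin n) :
    Tf r f (fun z => (σ' z).submatrix em em) = (Tf r f σ').submatrix em em := by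
  unfold Tf
  ext a b
  rw [Matrix.sum_apply, Matrix.submatrix_apply, Matrix.sum_apply]
  apply Finset.sum_congr rfl
  intro z _
  simp [Matrix.submatrix_apply]

lemma Tf_conjugate {n : ℕ} (σ' : G → Matrix (Fin n) (Fin n) ℂ) (f : G → ℂ)
    (U : Matrix (Fin n) (Fin n) ℂ) :
    Tf r f (fun z => star U * σ' z * U) = star U * Tf r f σ' * U := by
  unfold Tf
  rw [Matrix.mul_sum, Matrix.sum_mul]
  apply Finset.sum_congr rfl
  intro z _
  rw [Matrix.mul_smul, Matrix.smul_mul]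

end SubRep

section Vanish
open scoped Matrix
variable {G : Type*} [Group G] [Fintype G] {r : G}

theorem Tf_zero {ι : Type} [Fintype ι] {d : ι → ℕ}
    {ρ : ∀ i : ι, G → Matrix (Fin (d i)) (Fin (d i)) ℂ}
    (hirr : ∀ i : ι, IsCentIrrep r (ρ i))
    (hcomplete : ∀ (d' : ℕ) (σ : G → Matrix (Fin d') (Fin d') ℂ),
      IsCentIrrep r σ → ∃ i : ι, RepIsoOn r σ (ρ i))
    (f : G → ℂ)
    (hf : ∀ w z, w ∈ centFinset r → z ∈ centFinset r → f (w * z * w⁻¹) = f z)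
    (horth : ∀ j, ∑ z ∈ centFinset r, f z * (starRingEnd ℂ) ((ρ j z).trace) = 0) :
    ∀ (n : ℕ) (σ : G → Matrix (Fin n) (Fin n) ℂ), IsCentRep r σ → Tf r f σ = 0 := by
  intro n
  induction n using Nat.strong_induction_on with
  | _ n ih =>
  intro σ hσ
  by_cases hs : ∀ M : Matrix (Fin n) (Fin n) ℂ,
      (∀ z : G, z * r = r * z → M * σ z = σ z * M) → ∃ c : ℂ, M = c • 1
  · rcases Nat.eq_zero_or_pos n with hn | hn
    · subst hn
      ext a b
      exact absurd a.2 (by omega)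
    · obtain ⟨i, U, V, hUV, hVU, hcomm⟩ := hcomplete n σ ⟨hσ, hs⟩
      rcases Nat.eq_zero_or_pos (d i) with hdi | hdi
      · exfalso
        have h1 : (1 : Matrix (Fin n) (Fin n) ℂ) ⟨0, hn⟩ ⟨0, hn⟩ = 0 := by
          rw [← hUV, Matrix.mul_apply]
          exact Finset.sum_eq_zero fun c _ => absurd c.2 (by omega)
        rw [Matrix.one_apply_eq] at h1
        exact one_ne_zero h1
      · obtain ⟨c, hc⟩ := (hirr i).2 (Tf r f (ρ i))
          (fun z hz => (Tf_commute (hirr i).1 hf (mem_centFinset.mpr hz)).symm)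
        have htrace : (Tf r f (ρ i)).trace = 0 := by
          unfold Tf
          rw [Matrix.trace_sum]
          have heach : ∀ z ∈ centFinset r, ((starRingEnd ℂ) (f z) • (ρ i) z).trace
              = (starRingEnd ℂ) (f z * (starRingEnd ℂ) (((ρ i) z).trace)) := by
            intro z _
            rw [Matrix.trace_smul, map_mul, Complex.conj_conj, smul_eq_mul]
          rw [Finset.sum_congr rfl heach, ← map_sum, horth i, map_zero]
        have hc0 : c = 0 := by
          rw [hc, Matrix.trace_smul, Matrix.trace_one, smul_eq_mul] at htrace
          rcases mul_eq_zero.mp htrace with h | h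
          · exact h
          · exfalso
            rw [Fintype.card_fin] at h
            exact (by exact_mod_cast hdi.ne' : ((d i : ℂ)) ≠ 0) h
        have hTi : Tf r f (ρ i) = 0 := by rw [hc, hc0, zero_smul]
        have hTU : Tf r f σ * U = U * Tf r f (ρ i) := by
          unfold Tf
          rw [Matrix.sum_mul, Matrix.mul_sum]
          apply Finset.sum_congr rfl
          intro z hz
          rw [Matrix.smul_mul, Matrix.mul_smul, hcomm z (mem_centFinset.mp hz)]
        calc Tf r f σ = Tf r f σ * (U * V) := by rw [hUV, Matrix.mul_one]
          _ = (Tf r f σ * U) * V := by rw [Matrix.mul_assoc]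
          _ = 0 := by rw [hTU, hTi, Matrix.mul_zero, Matrix.zero_mul]
  · push_neg at hs
    obtain ⟨M, hMcomm, hMns⟩ := hs
    have hstar : ∀ z : G, z * r = r * z → Mᴴ * σ z = σ z * Mᴴ := by
      intro z hz
      have hz' : z ∈ centFinset r := mem_centFinset.mpr hz
      have h := congrArg star (hMcomm z⁻¹ (mem_centFinset.mp (inv_mem_cent hz')))
      rw [StarMul.star_mul, StarMul.star_mul, rep_star hσ (inv_mem_cent hz'), inv_inv] at h
      rw [← Matrix.star_eq_conjTranspose]
      exact h.symm
    have main : ∃ A : Matrix (Fin n) (Fin n) ℂ, A.IsHermitian ∧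
        (∀ z : G, z * r = r * z → A * σ z = σ z * A) ∧ ¬ ∃ c : ℂ, A = c • 1 := by
      by_cases h1 : ∃ c : ℂ, M + Mᴴ = c • 1
      · refine ⟨Complex.I • (M - Mᴴ), ?_, ?_, ?_⟩
        · show (Complex.I • (M - Mᴴ))ᴴ = _
          rw [Matrix.conjTranspose_smul, Matrix.conjTranspose_sub,
            Matrix.conjTranspose_conjTranspose]
          rw [Complex.star_def, Complex.conj_I, neg_smul, ← smul_neg, neg_sub]
        · intro z hz
          rw [Matrix.smul_mul, Matrix.mul_smul]
          congr 1
          rw [Matrix.sub_mul, Matrix.mul_sub, hMcomm z hz, hstar z hz]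
        · rintro ⟨c2, hc2⟩
          obtain ⟨c1, hc1⟩ := h1
          have hsub : M - Mᴴ = (Complex.I⁻¹ * c2) • 1 := by
            have h := congrArg (fun X => Complex.I⁻¹ • X) hc2
            simpa [smul_smul, inv_mul_cancel₀ Complex.I_ne_zero] using h
          have hsum : M + M = (c1 + Complex.I⁻¹ * c2) • 1 := by
            have h : M + M = (M + Mᴴ) + (M - Mᴴ) := by abel
            rw [h, hc1, hsub, ← add_smul]
          have hM : M = ((2:ℂ)⁻¹ * (c1 + Complex.I⁻¹ * c2)) • 1 := by
            have h := congrArg (fun X => (2:ℂ)⁻¹ • X) hsum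
            simp only [smul_smul] at h
            have h2 : ((2:ℂ)⁻¹) • (M + M) = M := by
              rw [← two_smul ℂ M, smul_smul, inv_mul_cancel₀ two_ne_zero, one_smul]
            rw [h2] at h
            exact h
          exact hMns _ hM
      · refine ⟨M + Mᴴ, ?_, ?_, h1⟩
        · show (M + Mᴴ)ᴴ = _
          rw [Matrix.conjTranspose_add, Matrix.conjTranspose_conjTranspose, add_comm]
        · intro z hz
          rw [Matrix.add_mul, Matrix.mul_add, hMcomm z hz, hstar z hz]
    obtain ⟨A, hAh, hAcomm, hAns⟩ := main
    set U : Matrix (Fin n) (Fin n) ℂ := (hAh.eigenvectorUnitary : Matrix (Fin n) (Fin n) ℂ)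
      with hUdef
    have hUmem : U ∈ Matrix.unitaryGroup (Fin n) ℂ := (hAh.eigenvectorUnitary).2
    have hUU' : U * star U = 1 := Matrix.mem_unitaryGroup_iff.mp hUmem
    have hU'U : star U * U = 1 := Matrix.mem_unitaryGroup_iff'.mp hUmem
    set μ : Fin n → ℝ := hAh.eigenvalues with hμdef
    have hspec : star U * A * U = Matrix.diagonal (RCLike.ofReal ∘ μ) :=
      by have := hAh.conjStarAlgAut_star_eigenvectorUnitary
         rwa [Unitary.conjStarAlgAut_star_apply] at this
    set σ' : G → Matrix (Fin n) (Fin n) ℂ := fun z => star U * σ z * U with hσ'def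
    have hσ'rep : IsCentRep r σ' := by
      refine ⟨?_, ?_, ?_⟩
      · show star U * σ 1 * U = 1
        rw [hσ.1, Matrix.mul_one, hU'U]
      · intro z w hz hw
        show star U * σ (z * w) * U = (star U * σ z * U) * (star U * σ w * U)
        rw [hσ.2.1 z w hz hw]
        have e1 : (star U * σ z * U) * (star U * σ w * U)
            = star U * σ z * (U * star U) * (σ w * U) := by noncomm_ring
        rw [e1, hUU', Matrix.mul_one]
        noncomm_ring
      · intro z hz
        exact mul_mem (mul_mem (Unitary.star_mem hUmem) (hσ.2.2 z hz)) hUmem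
    have hD : ∀ z ∈ centFinset r,
        σ' z * Matrix.diagonal (RCLike.ofReal ∘ μ)
          = Matrix.diagonal (RCLike.ofReal ∘ μ) * σ' z := by
      intro z hz
      rw [← hspec]
      show (star U * σ z * U) * (star U * A * U) = (star U * A * U) * (star U * σ z * U)
      have e1 : (star U * σ z * U) * (star U * A * U)
          = star U * σ z * (U * star U) * (A * U) := by noncomm_ring
      have e2 : (star U * A * U) * (star U * σ z * U)
          = star U * A * (U * star U) * (σ z * U) := by noncomm_ring
      rw [e1, e2, hUU', Matrix.mul_one, Matrix.mul_one]
      calc star U * σ z * (A * U) = star U * (σ z * A) * U := by noncomm_ring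
        _ = star U * (A * σ z) * U := by rw [hAcomm z (mem_centFinset.mp hz)]
        _ = star U * A * (σ z * U) := by noncomm_ring
    have hne : ∃ a b : Fin n, μ a ≠ μ b := by
      by_contra hcon
      push_neg at hcon
      apply hAns
      rcases Nat.eq_zero_or_pos n with hn0 | hn0
      · exact ⟨0, by ext a b; exact absurd a.2 (by omega)⟩
      · refine ⟨RCLike.ofReal (μ ⟨0, hn0⟩), ?_⟩
        have hdiag : Matrix.diagonal (RCLike.ofReal ∘ μ)
            = (RCLike.ofReal (μ ⟨0, hn0⟩) : ℂ) • (1 : Matrix (Fin n) (Fin n) ℂ) := by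
          ext a b
          by_cases h : a = b
          · subst h
            rw [Matrix.diagonal_apply_eq, Matrix.smul_apply, Matrix.one_apply_eq, smul_eq_mul,
              mul_one, Function.comp_apply, hcon a ⟨0, hn0⟩]
          · rw [Matrix.diagonal_apply_ne _ h, Matrix.smul_apply, Matrix.one_apply_ne h,
              smul_zero]
        rw [hAh.spectral_theorem, hdiag, Unitary.conjStarAlgAut_apply, Matrix.mul_smul, Matrix.smul_mul, Matrix.mul_one]
        rw [← hUdef, hUU']
    obtain ⟨a₀, b₀, hab⟩ := hne
    set Q : Fin n → Prop := fun x => μ x = μ a₀ with hQdef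
    have hcross : ∀ z ∈ centFinset r, ∀ x y : Fin n, ¬ (Q x ↔ Q y) → σ' z x y = 0 := by
      intro z hz x y hxy
      have hμxy : μ x ≠ μ y := by
        intro h
        apply hxy
        show μ x = μ a₀ ↔ μ y = μ a₀
        rw [h]
      have hentry := congrFun (congrFun (hD z hz) x) y
      rw [Matrix.mul_diagonal, Matrix.diagonal_mul] at hentry
      by_contra h0
      apply hμxy
      apply RCLike.ofReal_injective (K := ℂ)
      have : σ' z x y * (RCLike.ofReal ∘ μ) y = σ' z x y * (RCLike.ofReal ∘ μ) x := by
        rw [hentry, mul_comm]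
      exact (mul_left_cancel₀ h0 this.symm)
    have hQb₀ : ¬ Q b₀ := fun h => hab h.symm
    have hQa₀ : Q a₀ := rfl
    have hk₁ : Fintype.card {x : Fin n // Q x} < n := by
      have h := Fintype.card_subtype_lt (p := Q) (x := b₀) hQb₀
      simpa using h
    have hk₂ : Fintype.card {x : Fin n // ¬ Q x} < n := by
      have h := Fintype.card_subtype_lt (p := fun x => ¬ Q x) (x := a₀) (by simpa using hQa₀)
      simpa using h
    set e₁ : Fin (Fintype.card {x : Fin n // Q x}) ≃ {x : Fin n // Q x} :=
      (Fintype.equivFin {x : Fin n // Q x}).symm with he₁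
    set e₂ : Fin (Fintype.card {x : Fin n // ¬ Q x}) ≃ {x : Fin n // ¬ Q x} :=
      (Fintype.equivFin {x : Fin n // ¬ Q x}).symm with he₂
    have hrep₁ := subrep_isCentRep hσ'rep Q hcross e₁
    have hrep₂ := subrep_isCentRep hσ'rep (fun x => ¬ Q x)
      (fun z hz x y hxy => hcross z hz x y (by tauto)) e₂
    have hT₁ := ih _ hk₁ _ hrep₁
    have hT₂ := ih _ hk₂ _ hrep₂
    rw [Tf_submatrix] at hT₁ hT₂
    have hT' : Tf r f σ' = 0 := by
      have hzero : ∀ x y : Fin n, ¬ (Q x ↔ Q y) → Tf r f σ' x y = 0 := by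
        intro x y hxy
        unfold Tf
        rw [Matrix.sum_apply]
        apply Finset.sum_eq_zero
        intro z hz
        rw [Matrix.smul_apply, hcross z hz x y hxy, smul_zero]
      ext x y
      rw [Matrix.zero_apply]
      by_cases hx : Q x <;> by_cases hy : Q y
      · have h := congrFun (congrFun hT₁ (e₁.symm ⟨x, hx⟩)) (e₁.symm ⟨y, hy⟩)
        rw [Matrix.submatrix_apply, Matrix.zero_apply] at h
        simpa using h
      · exact hzero x y (by tauto)
      · exact hzero x y (by tauto)
      · have h := congrFun (congrFun hT₂ (e₂.symm ⟨x, hx⟩)) (e₂.symm ⟨y, hy⟩)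
        rw [Matrix.submatrix_apply, Matrix.zero_apply] at h
        simpa using h
    have hTconj : Tf r f σ' = star U * Tf r f σ * U := Tf_conjugate σ f U
    rw [hT'] at hTconj
    calc Tf r f σ = (U * star U) * Tf r f σ * (U * star U) := by
          rw [hUU', Matrix.one_mul, Matrix.mul_one]
      _ = U * (star U * Tf r f σ * U) * star U := by noncomm_ring
      _ = 0 := by rw [← hTconj, Matrix.mul_zero, Matrix.zero_mul]

end Vanish

section Key
open scoped Matrix
variable {G : Type*} [Group G] [Fintype G] {r : G}

lemma mem_conjClassIn {x z : G} :
    z ∈ conjClassIn r x ↔ ∃ w ∈ centFinset r, w * x * w⁻¹ = z := by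
  simp [conjClassIn]

lemma conjClassIn_subset_cent {d₀ : G} (hd₀ : d₀ ∈ centFinset r) :
    conjClassIn r d₀ ⊆ centFinset r := by
  intro z hz
  obtain ⟨w, hw, rfl⟩ := mem_conjClassIn.mp hz
  exact mul_mem_cent (mul_mem_cent hw hd₀) (inv_mem_cent hw)

lemma self_mem_conjClassIn {d₀ : G} : d₀ ∈ conjClassIn r d₀ :=
  mem_conjClassIn.mpr ⟨1, one_mem_cent, by group⟩

lemma conjClassIn_conj_mem {d₀ w z : G} (hw : w ∈ centFinset r) :
    w * z * w⁻¹ ∈ conjClassIn r d₀ ↔ z ∈ conjClassIn r d₀ := by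
  constructor
  · intro h
    obtain ⟨u, hu, huz⟩ := mem_conjClassIn.mp h
    refine mem_conjClassIn.mpr ⟨w⁻¹ * u, mul_mem_cent (inv_mem_cent hw) hu, ?_⟩
    have hzz : z = w⁻¹ * (w * z * w⁻¹) * w := by group
    rw [hzz, ← huz]; group
  · intro h
    obtain ⟨u, hu, rfl⟩ := mem_conjClassIn.mp h
    exact mem_conjClassIn.mpr ⟨w * u, mul_mem_cent hw hu, by group⟩

lemma trace_const_on_class {n : ℕ} {σ : G → Matrix (Fin n) (Fin n) ℂ} (hσ : IsCentRep r σ)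
    {d₀ z : G} (hd₀ : d₀ ∈ centFinset r) (hz : z ∈ conjClassIn r d₀) :
    (σ z).trace = (σ d₀).trace := by
  obtain ⟨w, hw, rfl⟩ := mem_conjClassIn.mp hz
  exact rep_trace_conj hσ hw hd₀

lemma trace_of_dim_zero {n : ℕ} (M : Matrix (Fin n) (Fin n) ℂ) (hn : n = 0) :
    M.trace = 0 :=
  Finset.sum_eq_zero fun c _ => absurd c.2 (by omega)

theorem key_column {ι : Type} [Fintype ι] {d : ι → ℕ}
    {ρ : ∀ i : ι, G → Matrix (Fin (d i)) (Fin (d i)) ℂ}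
    (hirr : ∀ i : ι, IsCentIrrep r (ρ i))
    (hdistinct : ∀ i j : ι, i ≠ j → ¬ RepIsoOn r (ρ i) (ρ j))
    (hcomplete : ∀ (d' : ℕ) (σ : G → Matrix (Fin d') (Fin d') ℂ),
      IsCentIrrep r σ → ∃ i : ι, RepIsoOn r σ (ρ i))
    {d₀ : G} (hd₀ : d₀ ∈ centFinset r) {z : G} (hz : z ∈ centFinset r) :
    ∑ i : ι, (ρ i d₀).trace * (starRingEnd ℂ) ((ρ i z).trace)
      = if z ∈ conjClassIn r d₀ then
          ((centFinset r).card : ℂ) / ((conjClassIn r d₀).card : ℂ) else 0 := by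
  set D := conjClassIn r d₀ with hD
  set Zc : ℂ := ((centFinset r).card : ℂ) with hZc
  set Dc : ℂ := ((D).card : ℂ) with hDc
  have hZne : Zc ≠ 0 := by
    simp only [hZc, Ne, Nat.cast_eq_zero, Finset.card_eq_zero]
    intro h
    have h1 := one_mem_cent (r := r)
    rw [h] at h1
    exact absurd h1 (Finset.notMem_empty 1)
  have hDne : Dc ≠ 0 := by
    simp only [hDc, Ne, Nat.cast_eq_zero, Finset.card_eq_zero]
    intro h
    have h1 := self_mem_conjClassIn (r := r) (d₀ := d₀)
    rw [← hD, h] at h1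
    exact absurd h1 (Finset.notMem_empty d₀)
  set g : G → ℂ := fun u => (if u ∈ D then 1 else 0)
    - (Dc / Zc) * ∑ i : ι, (starRingEnd ℂ) ((ρ i d₀).trace) * (ρ i u).trace with hg
  have hgclass : ∀ w u, w ∈ centFinset r → u ∈ centFinset r → g (w * u * w⁻¹) = g u := by
    intro w u hw hu
    simp only [hg]
    congr 1
    · exact if_congr (by rw [hD]; exact conjClassIn_conj_mem hw) rfl rfl
    · congr 1
      apply Finset.sum_congr rfl
      intro i _
      rw [rep_trace_conj (hirr i).1 hw hu]
  have hgorth : ∀ j, ∑ u ∈ centFinset r, g u * (starRingEnd ℂ) ((ρ j u).trace) = 0 := by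
    intro j
    by_cases hdj : d j = 0
    · apply Finset.sum_eq_zero
      intro u _
      rw [trace_of_dim_zero _ hdj, map_zero, mul_zero]
    · have hdj' : 0 < d j := Nat.pos_of_ne_zero hdj
      simp only [hg, sub_mul, Finset.sum_sub_distrib]
      have hstep : ∀ u ∈ centFinset r,
          (if u ∈ D then (1:ℂ) else 0) * (starRingEnd ℂ) ((ρ j u).trace)
          = (if u ∈ D then (starRingEnd ℂ) ((ρ j u).trace) else 0) := by
        intro u _; split_ifs <;> simp
      have hS1 : ∑ u ∈ centFinset r,
          (if u ∈ D then (1:ℂ) else 0) * (starRingEnd ℂ) ((ρ j u).trace)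
          = Dc * (starRingEnd ℂ) ((ρ j d₀).trace) := by
        rw [Finset.sum_congr rfl hstep, Finset.sum_ite_mem,
          Finset.inter_eq_right.mpr (conjClassIn_subset_cent hd₀),
          Finset.sum_congr rfl (fun u hu => by
            rw [trace_const_on_class (hirr j).1 hd₀ hu]),
          Finset.sum_const, nsmul_eq_mul]
      have hS2 : ∑ u ∈ centFinset r,
          (Dc / Zc) * (∑ i : ι, (starRingEnd ℂ) ((ρ i d₀).trace) * (ρ i u).trace)
            * (starRingEnd ℂ) ((ρ j u).trace)
          = Dc * (starRingEnd ℂ) ((ρ j d₀).trace) := by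
        have swap : ∑ u ∈ centFinset r,
            (Dc / Zc) * (∑ i : ι, (starRingEnd ℂ) ((ρ i d₀).trace) * (ρ i u).trace)
              * (starRingEnd ℂ) ((ρ j u).trace)
            = (Dc / Zc) * ∑ i : ι, (starRingEnd ℂ) ((ρ i d₀).trace)
              * ∑ u ∈ centFinset r, (ρ i u).trace * (starRingEnd ℂ) ((ρ j u).trace) := by
          calc ∑ u ∈ centFinset r,
              (Dc / Zc) * (∑ i : ι, (starRingEnd ℂ) ((ρ i d₀).trace) * (ρ i u).trace)
                * (starRingEnd ℂ) ((ρ j u).trace)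
              = ∑ u ∈ centFinset r, ∑ i : ι, (Dc / Zc) * ((starRingEnd ℂ) ((ρ i d₀).trace)
                  * ((ρ i u).trace * (starRingEnd ℂ) ((ρ j u).trace))) := by
                apply Finset.sum_congr rfl
                intro u _
                rw [Finset.mul_sum, Finset.sum_mul]
                apply Finset.sum_congr rfl
                intro i _
                ring
            _ = ∑ i : ι, ∑ u ∈ centFinset r, (Dc / Zc) * ((starRingEnd ℂ) ((ρ i d₀).trace)
                  * ((ρ i u).trace * (starRingEnd ℂ) ((ρ j u).trace))) := Finset.sum_comm
            _ = (Dc / Zc) * ∑ i : ι, (starRingEnd ℂ) ((ρ i d₀).trace)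
                  * ∑ u ∈ centFinset r, (ρ i u).trace * (starRingEnd ℂ) ((ρ j u).trace) := by
                rw [Finset.mul_sum]
                apply Finset.sum_congr rfl
                intro i _
                rw [← Finset.mul_sum, ← Finset.mul_sum]
        rw [swap]
        rw [Finset.sum_eq_single j (fun i _ hij => by
          rw [row_orth_ne (hirr i) (hirr j) (hdistinct i j hij), mul_zero])
          (fun h => absurd (Finset.mem_univ j) h)]
        rw [row_orth_self (hirr j) hdj', ← hZc]
        field_simp
      rw [hS1, hS2, sub_self]
  have hgzero : ∀ u ∈ centFinset r, g u = 0 := by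
    intro u hu
    set N := Fintype.card {x : G // x ∈ centFinset r} with hN
    set e : Fin N ≃ {x : G // x ∈ centFinset r} :=
      (Fintype.equivFin {x : G // x ∈ centFinset r}).symm with he
    set σreg : G → Matrix (Fin N) (Fin N) ℂ :=
      fun w => Matrix.of (fun a b => if ((e a : G)) = w * (e b : G) then 1 else 0) with hreg
    have hregrep : IsCentRep r σreg := by
      refine ⟨?_, ?_, ?_⟩
      · ext a b
        show (if ((e a : G)) = 1 * (e b : G) then (1:ℂ) else 0) = _
        rw [one_mul, Matrix.one_apply]
        by_cases h : a = b
        · subst h; simp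
        · rw [if_neg h, if_neg (fun hc => h (e.injective (Subtype.ext hc)))]
      · intro w v hw hv
        have hv' : v ∈ centFinset r := mem_centFinset.mpr hv
        ext a b
        rw [Matrix.mul_apply]
        set c₀ : Fin N := e.symm ⟨v * (e b : G), mul_mem_cent hv' (e b).2⟩ with hc₀
        have hec₀ : ((e c₀ : {x : G // x ∈ centFinset r}) : G) = v * (e b : G) := by
          rw [hc₀, Equiv.apply_symm_apply]
        rw [Finset.sum_eq_single c₀ (fun c _ hc => by
          show (if ((e a : G)) = w * (e c : G) then (1:ℂ) else 0)
            * (if ((e c : G)) = v * (e b : G) then (1:ℂ) else 0) = 0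
          rw [if_neg (fun hcc : ((e c : G)) = v * ((e b : G)) =>
              hc (e.injective (Subtype.ext (hcc.trans hec₀.symm)))),
            mul_zero])
          (fun h => absurd (Finset.mem_univ c₀) h)]
        show (if ((e a : G)) = w * v * (e b : G) then (1:ℂ) else 0)
          = (if ((e a : G)) = w * (e c₀ : G) then (1:ℂ) else 0)
            * (if ((e c₀ : G)) = v * (e b : G) then (1:ℂ) else 0)
        rw [hec₀, if_pos (show v * ((e b : G)) = v * ((e b : G)) from rfl), mul_one, mul_assoc]
      · intro w hw
        have hw' : w ∈ centFinset r := mem_centFinset.mpr hw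
        rw [Matrix.mem_unitaryGroup_iff']
        ext a b
        rw [Matrix.star_eq_conjTranspose, Matrix.mul_apply]
        have hterm : ∀ c : Fin N, (σreg w)ᴴ a c * σreg w c b
            = (if ((e c : G)) = w * (e a : G) then (1:ℂ) else 0)
              * (if ((e c : G)) = w * (e b : G) then (1:ℂ) else 0) := by
          intro c
          rw [Matrix.conjTranspose_apply]
          show (starRingEnd ℂ) (if ((e c : G)) = w * (e a : G) then (1:ℂ) else 0) * _ = _
          rw [apply_ite (starRingEnd ℂ), map_one, map_zero]
          rfl
        rw [Finset.sum_congr rfl (fun c _ => hterm c)]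
        set c₁ : Fin N := e.symm ⟨w * (e a : G), mul_mem_cent hw' (e a).2⟩ with hc₁
        have hec₁ : ((e c₁ : {x : G // x ∈ centFinset r}) : G) = w * (e a : G) := by
          rw [hc₁, Equiv.apply_symm_apply]
        rw [Finset.sum_eq_single c₁ (fun c _ hc => by
          rw [if_neg (fun hcc : ((e c : G)) = w * ((e a : G)) =>
              hc (e.injective (Subtype.ext (hcc.trans hec₁.symm)))),
            zero_mul])
          (fun h => absurd (Finset.mem_univ c₁) h)]
        rw [hec₁, if_pos rfl, one_mul, Matrix.one_apply]
        by_cases h : a = b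
        · subst h; simp
        · rw [if_neg (fun hc => h (e.injective (Subtype.ext (mul_left_cancel hc)))), if_neg h]
    have hTreg := Tf_zero hirr hcomplete g hgclass hgorth N σreg hregrep
    set b₁ : Fin N := e.symm ⟨1, one_mem_cent⟩ with hb₁
    have heb₁ : ((e b₁ : {x : G // x ∈ centFinset r}) : G) = 1 := by
      rw [hb₁, Equiv.apply_symm_apply]
    set a₁ : Fin N := e.symm ⟨u, hu⟩ with ha₁
    have hea₁ : ((e a₁ : {x : G // x ∈ centFinset r}) : G) = u := by
      rw [ha₁, Equiv.apply_symm_apply]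
    have hentry := congrFun (congrFun hTreg a₁) b₁
    rw [Matrix.zero_apply] at hentry
    unfold Tf at hentry
    rw [Matrix.sum_apply] at hentry
    rw [Finset.sum_eq_single_of_mem u hu (fun v hv hvu => by
      rw [Matrix.smul_apply]
      show (starRingEnd ℂ) (g v) • (if ((e a₁ : G)) = v * (e b₁ : G) then (1:ℂ) else 0) = 0
      rw [heb₁, mul_one, hea₁, if_neg (fun hc => hvu hc.symm), smul_zero])] at hentry
    rw [Matrix.smul_apply] at hentry
    have hfin : (starRingEnd ℂ) (g u)
        • (if ((e a₁ : G)) = u * (e b₁ : G) then (1:ℂ) else 0) = 0 := hentry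
    rw [heb₁, mul_one, hea₁, if_pos rfl, smul_eq_mul, mul_one] at hfin
    have hgu := congrArg (starRingEnd ℂ) hfin
    rwa [Complex.conj_conj, map_zero] at hgu
  -- derive the identity
  have hgz := hgzero z hz
  simp only [hg] at hgz
  rw [sub_eq_zero] at hgz
  have hS : ∑ i : ι, (starRingEnd ℂ) ((ρ i d₀).trace) * (ρ i z).trace
      = if z ∈ D then Zc / Dc else 0 := by
    have h3 : (Zc / Dc) * ((Dc / Zc)
        * ∑ i : ι, (starRingEnd ℂ) ((ρ i d₀).trace) * (ρ i z).trace)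
        = ∑ i : ι, (starRingEnd ℂ) ((ρ i d₀).trace) * (ρ i z).trace := by
      rw [← mul_assoc]
      rw [div_mul_div_comm]
      rw [mul_comm Zc Dc]
      rw [div_self (mul_ne_zero hDne hZne), one_mul]
    rw [← h3, ← hgz]
    split_ifs with h
    · rw [mul_one]
    · rw [mul_zero]
  have hconj := congrArg (starRingEnd ℂ) hS
  rw [map_sum] at hconj
  have hterm : ∀ i : ι, (starRingEnd ℂ) ((starRingEnd ℂ) ((ρ i d₀).trace) * (ρ i z).trace)
      = (ρ i d₀).trace * (starRingEnd ℂ) ((ρ i z).trace) := by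
    intro i
    rw [map_mul, Complex.conj_conj]
  rw [Finset.sum_congr rfl (fun i _ => hterm i)] at hconj
  rw [hconj]
  rw [apply_ite (starRingEnd ℂ), map_zero, map_div₀, hZc, hDc, map_natCast, map_natCast]

end Key


theorem class_sum_expansion_in_probing (G : Type*) [Group G] [Fintype G]
    (r : G) (p : G → G) (hp : ∀ c ∈ conjClass r, p c * r * (p c)⁻¹ = c)
    (d₀ : G) (hd₀ : d₀ * r = r * d₀)
    -- a complete set of pairwise non-isomorphic irreducible unitary representations of Z(r)
    (ι : Type) [Fintype ι]
    (d : ι → ℕ)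
    (ρ : ∀ i : ι, G → Matrix (Fin (d i)) (Fin (d i)) ℂ)
    (hirr : ∀ i : ι, IsCentIrrep r (ρ i))
    (hdistinct : ∀ i j : ι, i ≠ j → ¬ RepIsoOn r (ρ i) (ρ j))
    (hcomplete : ∀ (d' : ℕ) (σ : G → Matrix (Fin d') (Fin d') ℂ),
      IsCentIrrep r σ → ∃ i : ι, RepIsoOn r σ (ρ i)) :
    ((((conjClass r).card : ℂ) * ((centFinset r).card : ℂ)) /
        ((Fintype.card G : ℂ) * ((conjClassIn r d₀).card : ℂ))) •
      ∑ c ∈ conjClass r, ∑ k ∈ conjClassIn r d₀, Fgh c (p c * k * (p c)⁻¹)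
    = ∑ i : ι, (((ρ i d₀).trace) / ((d i : ℕ) : ℂ)) • Ptr r p (ρ i) := by
  have hd₀' : d₀ ∈ centFinset r := mem_centFinset.mpr hd₀
  symm
  calc ∑ i : ι, (((ρ i d₀).trace) / ((d i : ℕ) : ℂ)) • Ptr r p (ρ i)
      = ∑ i : ι, ∑ c ∈ conjClass r, ∑ z ∈ centFinset r,
          (((ρ i d₀).trace * ((conjClass r).card : ℂ) / (Fintype.card G : ℂ))
            * (starRingEnd ℂ) ((ρ i z).trace)) • Fgh c (p c * z * (p c)⁻¹) := by
        apply Finset.sum_congr rfl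
        intro i _
        by_cases hdi : d i = 0
        · rw [trace_of_dim_zero _ hdi, zero_div, zero_smul]
          symm
          apply Finset.sum_eq_zero; intro c _
          apply Finset.sum_eq_zero; intro z _
          rw [zero_mul, zero_div, zero_mul, zero_smul]
        · have hdine : ((d i : ℕ) : ℂ) ≠ 0 := by exact_mod_cast hdi
          unfold Ptr
          rw [smul_smul]
          have hcoef : ((ρ i d₀).trace / ((d i : ℕ) : ℂ))
              * (((conjClass r).card : ℂ) * ((d i : ℕ) : ℂ) / (Fintype.card G : ℂ))
              = (ρ i d₀).trace * ((conjClass r).card : ℂ) / (Fintype.card G : ℂ) := by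
            field_simp
          rw [hcoef, Finset.smul_sum]
          apply Finset.sum_congr rfl
          intro c _
          rw [Finset.smul_sum]
          apply Finset.sum_congr rfl
          intro z _
          rw [smul_smul]
    _ = ∑ c ∈ conjClass r, ∑ z ∈ centFinset r,
          ((∑ i : ι, (ρ i d₀).trace * (starRingEnd ℂ) ((ρ i z).trace))
            * (((conjClass r).card : ℂ) / (Fintype.card G : ℂ)))
            • Fgh c (p c * z * (p c)⁻¹) := by
        rw [Finset.sum_comm]
        apply Finset.sum_congr rfl
        intro c _
        rw [Finset.sum_comm]
        apply Finset.sum_congr rfl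
        intro z _
        rw [← Finset.sum_smul, Finset.sum_mul]
        congr 1
        apply Finset.sum_congr rfl
        intro i _
        ring
    _ = ∑ c ∈ conjClass r, ∑ z ∈ centFinset r,
          ((if z ∈ conjClassIn r d₀ then
              (((centFinset r).card : ℂ) / ((conjClassIn r d₀).card : ℂ))
                * (((conjClass r).card : ℂ) / (Fintype.card G : ℂ)) else 0)
            • Fgh c (p c * z * (p c)⁻¹)) := by
        apply Finset.sum_congr rfl
        intro c _
        apply Finset.sum_congr rfl
        intro z hzZ
        rw [key_column hirr hdistinct hcomplete hd₀' hzZ, ite_mul, zero_mul]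
    _ = ∑ c ∈ conjClass r, ∑ z ∈ conjClassIn r d₀,
          ((((centFinset r).card : ℂ) / ((conjClassIn r d₀).card : ℂ))
            * (((conjClass r).card : ℂ) / (Fintype.card G : ℂ)))
            • Fgh c (p c * z * (p c)⁻¹) := by
        apply Finset.sum_congr rfl
        intro c _
        have hstep : ∀ z ∈ centFinset r,
            ((if z ∈ conjClassIn r d₀ then
              (((centFinset r).card : ℂ) / ((conjClassIn r d₀).card : ℂ))
                * (((conjClass r).card : ℂ) / (Fintype.card G : ℂ)) else 0)
              • Fgh c (p c * z * (p c)⁻¹))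
            = (if z ∈ conjClassIn r d₀ then
                ((((centFinset r).card : ℂ) / ((conjClassIn r d₀).card : ℂ))
                  * (((conjClass r).card : ℂ) / (Fintype.card G : ℂ)))
                  • Fgh c (p c * z * (p c)⁻¹) else 0) := by
          intro z _
          split_ifs <;> simp
        rw [Finset.sum_congr rfl hstep, Finset.sum_ite_mem,
          Finset.inter_eq_right.mpr (conjClassIn_subset_cent hd₀')]
    _ = ((((conjClass r).card : ℂ) * ((centFinset r).card : ℂ)) /
          ((Fintype.card G : ℂ) * ((conjClassIn r d₀).card : ℂ))) •
        ∑ c ∈ conjClass r, ∑ k ∈ conjClassIn r d₀, Fgh c (p c * k * (p c)⁻¹) := by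
        rw [Finset.smul_sum]
        apply Finset.sum_congr rfl
        intro c _
        rw [Finset.smul_sum]
        apply Finset.sum_congr rfl
        intro z _
        congr 1
        ring


end
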